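/- For all n ≥ 1, the cylinder [.w_n l_n] is the disjoint union of the cylinders [.w_{n+1} b], [.w_{n+1} c], and [.w_{n+1} d]. -/

import Mathlib

inductive A : Type
  | a | b | c | d
deriving DecidableEq

def subst : A → List A
  | A.a => [A.a, A.c, A.a]
  | A.b => [A.d]
  | A.c => [A.b]
  | A.d => [A.c]

def substW (u : List A) : List A := u.flatMap subst

def wrd (n : ℕ) : List A := substW^[n - 1] [A.a]

def ltr (n : ℕ) : List A := substW^[n - 1] [A.c]

def seg (ξ : ℕ → A) (s m : ℕ) : List A := (List.range m).map fun i => ξ (s + 1 + i)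

def IsFixed (ξ : ℕ → A) : Prop :=
  ∀ N : ℕ, seg ξ 0 ((substW (seg ξ 0 N)).length) = substW (seg ξ 0 N)

/-- The phase space of the subshift: bi-infinite sequences all of whose finite
factors occur in the fixed point `ξ`. -/
def Omega (ξ : ℕ → A) : Set (ℤ → A) :=
  {ω | ∀ (s : ℤ) (m : ℕ), ∃ t : ℕ,
    seg ξ t m = (List.range m).map fun i => ω (s + 1 + (i : ℤ))}

/-- The `N`-th power of the shift map `T`. -/
def shiftN (N : ℤ) (ω : ℤ → A) : ℤ → A := fun i => ω (i + N)

/-- The cylinder `[u.v]` inside `Omega ξ`. -/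
def cyl (ξ : ℕ → A) (u v : List A) : Set (ℤ → A) :=
  {ω | ω ∈ Omega ξ ∧
    (List.range u.length).map (fun i => ω (1 + (i : ℤ) - u.length)) = u ∧
    (List.range v.length).map (fun i => ω (1 + (i : ℤ))) = v}

/-- The cylinder `[.v]` with empty past word. -/
def cylF (ξ : ℕ → A) (v : List A) : Set (ℤ → A) := cyl ξ [] v

-- σ on single non-a letters
def g1 : A → A
  | A.a => A.a
  | A.b => A.d
  | A.c => A.b
  | A.d => A.c

lemma substW_append (u v : List A) : substW (u ++ v) = substW u ++ substW v := by
  simp [substW]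

lemma substW_iter_append (k : ℕ) (u v : List A) :
    substW^[k] (u ++ v) = substW^[k] u ++ substW^[k] v := by
  induction k generalizing u v with
  | zero => simp
  | succ k ih => simp [Function.iterate_succ_apply, substW_append, ih]

lemma subst_nonA {x : A} (h : x ≠ A.a) : subst x = [g1 x] := by
  cases x <;> simp_all [subst, g1]

lemma g1_iter_c_mem (j : ℕ) :
    g1^[j] A.c = A.b ∨ g1^[j] A.c = A.c ∨ g1^[j] A.c = A.d := by
  induction j with
  | zero => simp
  | succ j ih =>
    rw [Function.iterate_succ_apply']
    rcases ih with h | h | h <;> rw [h] <;> simp [g1]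

lemma g1_iter_c_ne_a (j : ℕ) : g1^[j] A.c ≠ A.a := by
  rcases g1_iter_c_mem j with h | h | h <;> simp [h]

lemma g1_iter_c_ne_succ (j : ℕ) : g1^[j] A.c ≠ g1^[j+1] A.c := by
  rw [Function.iterate_succ_apply']
  rcases g1_iter_c_mem j with h | h | h <;> rw [h] <;> simp [g1]

lemma ltr_eq (n : ℕ) (hn : 1 ≤ n) : ltr n = [g1^[n-1] A.c] := by
  induction n with
  | zero => omega
  | succ n ih =>
    rcases Nat.eq_or_lt_of_le hn with h | h
    · simp [ltr, ← h]
    · have hn1 : 1 ≤ n := by omega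
      have : ltr (n+1) = substW (ltr n) := by
        show substW^[n+1-1] [A.c] = _
        rw [show n+1-1 = (n-1)+1 by omega, Function.iterate_succ_apply']
        rfl
      rw [this, ih hn1, substW, List.flatMap_cons, List.flatMap_nil,
        subst_nonA (g1_iter_c_ne_a _), List.append_nil,
        show n+1-1 = (n-1)+1 by omega, Function.iterate_succ_apply']

lemma wrd_succ (n : ℕ) (hn : 1 ≤ n) : wrd (n+1) = wrd n ++ ltr n ++ wrd n := by
  show substW^[n+1-1] [A.a] = _
  rw [show n+1-1 = n by omega]
  have : substW^[n] [A.a] = substW^[n-1] (substW [A.a]) := by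
    conv_lhs => rw [show n = (n-1)+1 by omega]
    rw [Function.iterate_succ_apply]
  rw [this, show substW [A.a] = [A.a] ++ [A.c] ++ [A.a] by rfl,
    substW_iter_append, substW_iter_append]
  rfl

lemma wrd_length (n : ℕ) (hn : 1 ≤ n) : (wrd n).length = 2^n - 1 := by
  induction n with
  | zero => omega
  | succ n ih =>
    rcases Nat.eq_or_lt_of_le hn with h | h
    · simp [wrd, ← h]
    · have hn1 : 1 ≤ n := by omega
      rw [wrd_succ n hn1, ltr_eq n hn1]
      simp [ih hn1]
      have : 1 ≤ 2^n := Nat.one_le_two_pow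
      rw [pow_succ]
      omega

def xi0 : ℕ → A
  | 0 => A.a
  | 1 => A.a
  | (m+2) =>
    if (m+2) % 2 = 1 then A.a
    else if (m+2) % 4 = 2 then A.c
    else g1 (xi0 ((m+2)/2))
decreasing_by omega

lemma xi0_odd (m : ℕ) : xi0 (2*m+1) = A.a := by
  match m with
  | 0 => simp [xi0]
  | m+1 =>
    show xi0 ((2*m+1)+2) = A.a
    rw [xi0]
    simp [Nat.add_mul_mod_self_left]

lemma xi0_42 (m : ℕ) : xi0 (4*m+2) = A.c := by
  show xi0 ((4*m)+2) = A.c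
  rw [xi0]
  have h1 : (4*m+2) % 2 = 0 := by omega
  have h2 : (4*m+2) % 4 = 2 := by omega
  simp [h1, h2]

lemma xi0_44 (m : ℕ) : xi0 (4*m+4) = g1 (xi0 (2*m+2)) := by
  show xi0 ((4*m+2)+2) = _
  rw [xi0]
  have h1 : (4*m+4) % 2 = 0 := by omega
  have h2 : (4*m+4) % 4 = 0 := by omega
  have h3 : (4*m+4)/2 = 2*m+2 := by omega
  simp only [show 4*m+2+2 = 4*m+4 by ring, h1, h2, h3]
  simp

lemma xi0_val (s : ℕ) (hs : 1 ≤ s) (k : ℕ) :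
    xi0 (2^s * (2*k+1)) = g1^[s-1] A.c := by
  induction s with
  | zero => omega
  | succ s ih =>
    rcases Nat.eq_or_lt_of_le hs with h | h
    · rw [← h]
      simp only [pow_one, show 2*(2*k+1) = 4*k+2 by ring, xi0_42]
      rfl
    · have hs1 : 1 ≤ s := by omega
      have hpos : 1 ≤ 2^(s-1)*(2*k+1) := Nat.one_le_iff_ne_zero.mpr (by positivity)
      obtain ⟨j, hj⟩ : ∃ j, 2^(s-1) * (2*k+1) = j+1 := ⟨2^(s-1)*(2*k+1) - 1, by omega⟩
      have key : 2^(s+1) * (2*k+1) = 4*j+4 := by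
        have : 2^(s+1) = 4 * 2^(s-1) := by
          rw [show s+1 = (s-1)+2 by omega, pow_add]; ring
        rw [this, mul_assoc, hj]; ring
      have key2 : 2^s * (2*k+1) = 2*j+2 := by
        have : 2^s = 2 * 2^(s-1) := by
          conv_lhs => rw [show s = (s-1)+1 by omega]
          rw [pow_succ]; ring
        rw [this, mul_assoc, hj]; ring
      rw [key, xi0_44, ← key2, ih hs1, show s+1-1 = (s-1)+1 by omega,
        Function.iterate_succ_apply']

lemma xi0_even_mem (m : ℕ) (hm : 1 ≤ m) :
    ∃ s, 1 ≤ s ∧ xi0 (2*m) = g1^[s-1] A.c := by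
  obtain ⟨s, q, hq, hsq⟩ := Nat.exists_eq_pow_mul_and_not_dvd (show 2*m ≠ 0 by omega) 2 (by norm_num)
  obtain ⟨k, hk⟩ : ∃ k, q = 2*k+1 := ⟨q/2, by omega⟩
  have hs : 1 ≤ s := by
    rcases Nat.eq_zero_or_pos s with h | h
    · subst h; simp at hsq; omega
    · exact h
  exact ⟨s, hs, by rw [hsq, hk, xi0_val s hs]⟩

lemma xi0_even_ne_a (m : ℕ) (hm : 1 ≤ m) : xi0 (2*m) ≠ A.a := by
  obtain ⟨s, _, h⟩ := xi0_even_mem m hm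
  rw [h]; exact g1_iter_c_ne_a _

lemma mapRange_add {α : Type*} (f : ℕ → α) (a b : ℕ) :
    (List.range (a+b)).map f = (List.range a).map f ++ (List.range b).map (fun i => f (a+i)) := by
  rw [List.range_add, List.map_append, List.map_map]
  rfl

lemma mapRange_getElem {α : Type*} {f : ℕ → α} {m : ℕ} {L : List α}
    (h : (List.range m).map f = L) {i : ℕ} (hi : i < m) :
    f i = L[i]'(by subst h; simpa using hi) := by
  subst h; simp

lemma mapRange_congr {α : Type*} {f g : ℕ → α} {m : ℕ} (h : ∀ i < m, f i = g i) :
    (List.range m).map f = (List.range m).map g := by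
  apply List.map_congr_left
  intro i hi
  exact h i (List.mem_range.mp hi)

lemma mapRange_prefix {α : Type*} {f : ℕ → α} {m : ℕ} {u v : List α}
    (h : (List.range m).map f = u ++ v) :
    (List.range u.length).map f = u := by
  have hlen : m = u.length + v.length := by
    have := congrArg List.length h
    simpa using this
  subst hlen
  rw [mapRange_add] at h
  exact (List.append_inj h (by simp)).1

/-- Block decomposition: at every multiple of `2^n`, `xi0` reads `wrd n`. -/
lemma blk (n : ℕ) (hn : 1 ≤ n) (k : ℕ) :
    (List.range (2^n - 1)).map (fun i => xi0 (k * 2^n + 1 + i)) = wrd n := by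
  induction n generalizing k with
  | zero => omega
  | succ n ih =>
    rcases Nat.eq_or_lt_of_le hn with h | h
    · have hn0 : n = 0 := by omega
      subst hn0
      rw [show (2:ℕ)^(0+1) - 1 = 1 by norm_num, show List.range 1 = [0] from rfl,
        show wrd (0+1) = [A.a] from rfl]
      simp only [List.map_cons, List.map_nil]
      rw [show k * 2^(0+1) + 1 + 0 = 2*k+1 by ring, xi0_odd]
    · have hn1 : 1 ≤ n := by omega
      have h2 : 1 ≤ 2^n := Nat.one_le_two_pow
      have hsplit : 2^(n+1) - 1 = (2^n - 1) + (1 + (2^n - 1)) := by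
        rw [pow_succ]; omega
      rw [hsplit, mapRange_add, mapRange_add]
      have e1 : (List.range (2^n - 1)).map (fun i => xi0 (k * 2^(n+1) + 1 + i))
          = wrd n := by
        rw [← ih hn1 (2*k)]
        apply mapRange_congr
        intro i _
        congr 1
        rw [pow_succ]; ring
      have e2 : (List.range 1).map (fun i => xi0 (k * 2^(n+1) + 1 + (2^n - 1 + i)))
          = [g1^[n-1] A.c] := by
        rw [show List.range 1 = [0] from rfl]
        simp only [List.map_cons, List.map_nil]
        congr 1
        have : k * 2^(n+1) + 1 + (2^n - 1 + 0) = 2^n * (2*k+1) := by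
          rw [pow_succ]
          have : 2^n * (2*k+1) = k * (2^n * 2) + 2^n := by ring
          omega
        rw [this, xi0_val n hn1]
      have e3 : (List.range (2^n - 1)).map
            (fun i => xi0 (k * 2^(n+1) + 1 + (2^n - 1 + (1 + i)))) = wrd n := by
        rw [← ih hn1 (2*k+1)]
        apply mapRange_congr
        intro i _
        congr 1
        have : (2*k+1) * 2^n + 1 + i = k * (2^n * 2) + 1 + (2^n - 1 + (1 + i)) := by
          have : (2*k+1) * 2^n = k * (2^n * 2) + 2^n := by ring
          omega
        rw [pow_succ, ← this]
      rw [e1, e2, e3, wrd_succ n hn1, ltr_eq n hn1, List.append_assoc]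

/-- Alignment: an occurrence of `wrd n ++ ltr n` in `xi0` starts at a multiple of `2^n`. -/
lemma aln (n : ℕ) (hn : 1 ≤ n) : ∀ t : ℕ,
    (List.range (2^n)).map (fun i => xi0 (t+1+i)) = wrd n ++ ltr n → 2^n ∣ t := by
  induction n with
  | zero => omega
  | succ n ih =>
    intro t h
    rcases Nat.eq_or_lt_of_le hn with hc | hc
    · -- n + 1 = 1
      have hn0 : n = 0 := by omega
      subst hn0
      rw [show wrd (0+1) ++ ltr (0+1) = [A.a, A.c] from rfl] at h
      have h0 := mapRange_getElem h (show 0 < 2^(0+1) by norm_num)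
      simp only [List.getElem_cons_zero] at h0
      -- h0 : xi0 (t+1+0) = A.a
      rcases Nat.even_or_odd t with ⟨j, hj⟩ | ⟨j, hj⟩
      · exact ⟨j, by omega⟩
      · exfalso
        have : t + 1 + 0 = 2*(j+1) := by omega
        rw [this] at h0
        exact xi0_even_ne_a (j+1) (by omega) h0
    · have hn1 : 1 ≤ n := by omega
      have hp : (1:ℕ) ≤ 2^n := Nat.one_le_two_pow
      have hp1 : (1:ℕ) ≤ 2^(n+1) := Nat.one_le_two_pow
      -- prefix occurrence of wrd n ++ ltr n
      have h2 : (List.range (2^(n+1))).map (fun i => xi0 (t+1+i))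
          = (wrd n ++ ltr n) ++ (wrd n ++ ltr (n+1)) := by
        rw [h, wrd_succ n hn1]
        simp [List.append_assoc]
      have hpre := mapRange_prefix h2
      have hulen : (wrd n ++ ltr n).length = 2^n := by
        rw [List.length_append, wrd_length n hn1, ltr_eq n hn1]
        simp
        omega
      rw [hulen] at hpre
      obtain ⟨k, hk⟩ := ih hn1 t hpre
      -- last letter
      rw [show (2:ℕ)^(n+1) = (2^(n+1)-1) + 1 by omega, mapRange_add,
        ltr_eq (n+1) (by omega)] at h
      have hinj := List.append_inj h
        (by simp [wrd_length (n+1) (by omega)])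
      have hlast : xi0 (t + 2^(n+1)) = g1^[n] A.c := by
        have h3 := hinj.2
        rw [show List.range 1 = [0] from rfl] at h3
        simp only [List.map_cons, List.map_nil, List.cons.injEq] at h3
        rw [show n+1-1 = n from rfl] at h3
        rw [show t + 2^(n+1) = t + 1 + (2^(n+1) - 1 + 0) by omega]
        exact h3.1
      rcases Nat.even_or_odd k with ⟨j, hj⟩ | ⟨j, hj⟩
      · refine ⟨j, ?_⟩
        rw [hk, hj, pow_succ]
        ring
      · exfalso
        have harg : t + 2^(n+1) = 2^n * (2*(j+1)+1) := by
          have e1 : 2^n * (2*(j+1)+1) = 2^n * k + 2^n * 2 := by rw [hj]; ring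
          have e2 : (2:ℕ)^(n+1) = 2^n * 2 := by rw [pow_succ]
          omega
        rw [harg, xi0_val n hn1] at hlast
        exact g1_iter_c_ne_succ (n-1) (by rw [show n-1+1 = n by omega]; exact hlast)

/-- Key lemma: an occurrence of `wrd n ++ ltr n` extends uniquely to
`wrd (n+1) ++ [x]` with `x ≠ a`. -/
lemma key (n : ℕ) (hn : 1 ≤ n) (t : ℕ)
    (h : (List.range (2^n)).map (fun i => xi0 (t+1+i)) = wrd n ++ ltr n) :
    ∃ x, x ≠ A.a ∧
      (List.range (2^(n+1))).map (fun i => xi0 (t+1+i)) = wrd (n+1) ++ [x] := by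
  obtain ⟨k, hk⟩ := aln n hn t h
  have hp : (1:ℕ) ≤ 2^n := Nat.one_le_two_pow
  have hps : (2:ℕ)^(n+1) = 2^n * 2 := by rw [pow_succ]
  refine ⟨xi0 (t + 2^(n+1)), ?_, ?_⟩
  · have e2 : 2 * 2^(n-1) = 2^n := by
      conv_rhs => rw [show n = (n-1)+1 by omega]
      rw [pow_succ]; ring
    have e1 : 2 * (2^(n-1) * (k+2)) = 2^n * k + 2^n * 2 := by
      rw [← mul_assoc, e2]; ring
    have : t + 2^(n+1) = 2 * (2^(n-1) * (k+2)) := by omega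
    rw [this]
    exact xi0_even_ne_a _ (Nat.one_le_iff_ne_zero.mpr (by positivity))
  · rw [show (2:ℕ)^(n+1) = 2^n + ((2^n - 1) + 1) by omega, mapRange_add, mapRange_add, h]
    have e2 : (List.range (2^n - 1)).map (fun i => xi0 (t+1+(2^n + i))) = wrd n := by
      rw [← blk n hn (k+1)]
      apply mapRange_congr
      intro i _
      congr 1
      have : (k+1) * 2^n = 2^n * k + 2^n := by ring
      omega
    have e3 : (List.range 1).map (fun i => xi0 (t+1+(2^n + (2^n - 1 + i))))
        = [xi0 (t + 2^(n+1))] := by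
      rw [show List.range 1 = [0] from rfl]
      simp only [List.map_cons, List.map_nil]
      congr 2
      omega
    rw [e2, e3, wrd_succ n hn]
    simp only [List.append_assoc, List.cons_append, List.nil_append]
    congr 3
    rw [show t + (2^n + (2^n-1+1)) = t + 2^(n+1) by omega]

lemma seg_zero_one (ξ : ℕ → A) : seg ξ 0 1 = [ξ 1] := by
  simp [seg, show List.range 1 = [0] from rfl]

lemma xi_one (ξ : ℕ → A) (hξ : IsFixed ξ) : ξ 1 = A.a := by
  have h := hξ 1
  rw [seg_zero_one] at h
  cases hA : ξ 1 with
  | a => rfl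
  | b =>
    exfalso
    rw [hA, show substW [A.b] = [A.d] from rfl,
      show ([A.d] : List A).length = 1 from rfl, seg_zero_one, hA] at h
    simp at h
  | c =>
    exfalso
    rw [hA, show substW [A.c] = [A.b] from rfl,
      show ([A.b] : List A).length = 1 from rfl, seg_zero_one, hA] at h
    simp at h
  | d =>
    exfalso
    rw [hA, show substW [A.d] = [A.c] from rfl,
      show ([A.c] : List A).length = 1 from rfl, seg_zero_one, hA] at h
    simp at h

lemma pfx (ξ : ℕ → A) (hξ : IsFixed ξ) :
    ∀ k, 1 ≤ k → seg ξ 0 ((wrd k).length) = wrd k := by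
  intro k hk
  induction k with
  | zero => omega
  | succ k ih =>
    rcases Nat.eq_or_lt_of_le hk with h | h
    · have hk0 : k = 0 := by omega
      subst hk0
      rw [show wrd (0+1) = [A.a] from rfl,
        show ([A.a] : List A).length = 1 from rfl, seg_zero_one, xi_one ξ hξ]
    · have hk1 : 1 ≤ k := by omega
      have h := hξ ((wrd k).length)
      rw [ih hk1] at h
      have hs : substW (wrd k) = wrd (k+1) := by
        show substW (substW^[k-1] [A.a]) = substW^[k+1-1] [A.a]
        rw [show k+1-1 = (k-1)+1 by omega, Function.iterate_succ_apply']
      rw [hs] at h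
      exact h

lemma xeq (ξ : ℕ → A) (hξ : IsFixed ξ) : ∀ m, 1 ≤ m → ξ m = xi0 m := by
  intro m hm
  have hidx : m - 1 < 2^m - 1 := by
    have := m.lt_two_pow_self
    omega
  have hpfx := pfx ξ hξ m hm
  rw [wrd_length m hm] at hpfx
  have hpfx' : (List.range (2^m - 1)).map (fun i => ξ (0 + 1 + i)) = wrd m := hpfx
  have h1 := mapRange_getElem hpfx' hidx
  have h2 := mapRange_getElem (blk m hm 0) hidx
  have h3 := h1.trans h2.symm
  rw [show 0 + 1 + (m-1) = m by omega, show 0 * 2^m + 1 + (m-1) = m by omega] at h3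
  exact h3

lemma seg_eq (ξ : ℕ → A) (hξ : IsFixed ξ) (t m : ℕ) :
    seg ξ t m = (List.range m).map (fun i => xi0 (t + 1 + i)) := by
  unfold seg
  apply mapRange_congr
  intro i _
  exact xeq ξ hξ (t+1+i) (by omega)


lemma castMap {α : Type*} (g : ℤ → α) (l : List ℕ) :
    List.map g (l.flatMap fun a => [((a:ℕ):ℤ)]) = l.map (fun i : ℕ => g (i:ℤ)) := by
  induction l with
  | nil => rfl
  | cons x l ih => simp [ih]

lemma mem_cylF {ξ : ℕ → A} {v : List A} {ω : ℤ → A} :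
    ω ∈ cylF ξ v ↔ ω ∈ Omega ξ ∧
      (List.range v.length).map (fun i : ℕ => ω (1 + (i:ℤ))) = v := by
  show (_ ∧ _ ∧ _) ↔ _
  simp only [List.pure_def, List.bind_eq_flatMap, castMap, List.length_nil,
    List.range_zero, List.flatMap_nil, List.map_nil, true_and]

theorem stmt15 (ξ : ℕ → A) (hξ : IsFixed ξ) :
    ∀ n : ℕ, 1 ≤ n →
      cylF ξ (wrd n ++ ltr n) =
        cylF ξ (wrd (n + 1) ++ [A.b]) ∪ cylF ξ (wrd (n + 1) ++ [A.c]) ∪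
          cylF ξ (wrd (n + 1) ++ [A.d]) ∧
      Disjoint (cylF ξ (wrd (n + 1) ++ [A.b])) (cylF ξ (wrd (n + 1) ++ [A.c])) ∧
      Disjoint (cylF ξ (wrd (n + 1) ++ [A.b])) (cylF ξ (wrd (n + 1) ++ [A.d])) ∧
      Disjoint (cylF ξ (wrd (n + 1) ++ [A.c])) (cylF ξ (wrd (n + 1) ++ [A.d])) := by
  intro n hn
  have hp : (1:ℕ) ≤ 2^n := Nat.one_le_two_pow
  have hp1 : (1:ℕ) ≤ 2^(n+1) := Nat.one_le_two_pow
  have hps : (2:ℕ)^(n+1) = 2^n * 2 := by rw [pow_succ]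
  have hlen1 : (wrd n ++ ltr n).length = 2^n := by
    rw [List.length_append, wrd_length n hn, ltr_eq n hn]
    simp
    omega
  have hlen2 : ∀ x : A, (wrd (n+1) ++ [x]).length = 2^(n+1) := by
    intro x
    rw [List.length_append, wrd_length (n+1) (by omega)]
    simp
    omega
  have hdisj : ∀ x y : A, x ≠ y →
      Disjoint (cylF ξ (wrd (n+1) ++ [x])) (cylF ξ (wrd (n+1) ++ [y])) := by
    intro x y hxy
    rw [Set.disjoint_left]
    intro ω h1 h2
    have e1 := (mem_cylF.mp h1).2
    have e2 := (mem_cylF.mp h2).2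
    rw [show (wrd (n+1) ++ [y]).length = (wrd (n+1) ++ [x]).length by simp] at e2
    have := e1.symm.trans e2
    simp at this
    exact hxy this
  refine ⟨?_, hdisj _ _ (by simp), hdisj _ _ (by simp), hdisj _ _ (by simp)⟩
  have hsub : ∀ x : A, cylF ξ (wrd (n+1) ++ [x]) ⊆ cylF ξ (wrd n ++ ltr n) := by
    intro x ω h
    obtain ⟨hΩ, hw⟩ := mem_cylF.mp h
    refine mem_cylF.mpr ⟨hΩ, ?_⟩
    have hw' : (List.range ((wrd (n+1) ++ [x]).length)).map (fun i : ℕ => ω (1 + (i:ℤ)))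
        = (wrd n ++ ltr n) ++ (wrd n ++ [x]) := by
      rw [hw, wrd_succ n hn]
      simp [List.append_assoc]
    exact mapRange_prefix hw'
  ext ω
  constructor
  · intro h
    obtain ⟨hΩ, hw⟩ := mem_cylF.mp h
    rw [hlen1] at hw
    obtain ⟨t, ht⟩ := hΩ 0 (2^(n+1))
    rw [seg_eq ξ hξ] at ht
    simp only [List.pure_def, List.bind_eq_flatMap, castMap, zero_add] at ht
    have htpre : (List.range (2^n)).map (fun i => xi0 (t+1+i)) = wrd n ++ ltr n := by
      have ht2 := ht
      rw [show (2:ℕ)^(n+1) = 2^n + 2^n by omega, mapRange_add, mapRange_add] at ht2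
      exact (List.append_inj ht2 (by simp)).1.trans hw
    obtain ⟨x, hxa, hx⟩ := key n hn t htpre
    have hωwin : (List.range (2^(n+1))).map (fun i : ℕ => ω (1 + (i:ℤ)))
        = wrd (n+1) ++ [x] := ht.symm.trans hx
    have hmem : ∀ x : A, (List.range (2^(n+1))).map (fun i : ℕ => ω (1 + (i:ℤ)))
        = wrd (n+1) ++ [x] → ω ∈ cylF ξ (wrd (n+1) ++ [x]) := by
      intro x hxw
      refine mem_cylF.mpr ⟨hΩ, ?_⟩
      rw [hlen2 x]
      exact hxw
    cases x with
    | a => exact absurd rfl hxa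
    | b => exact Or.inl (Or.inl (hmem _ hωwin))
    | c => exact Or.inl (Or.inr (hmem _ hωwin))
    | d => exact Or.inr (hmem _ hωwin)
  · intro h
    rcases h with (h | h) | h
    · exact hsub A.b h
    · exact hsub A.c h
    · exact hsub A.d h
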